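/- Define values recursively by V_M(S) piecewise linear with |V_M(S)| ≤ AS + B for all S > 0, and for 1 ≤ m ≤ M: Ṽ_{m-1}(S) = e^{-2r_mτ_m/σ_m²} ∫_0^∞ V_m(y) ρ_m(y,S) dy on (K_{m-1}^-, K_{m-1}^+), with V_{m-1}(S) = Ṽ_{m-1}(S) on (K_{m-1}^-, K_{m-1}^+) and V_{m-1}(S) = a_{m-1}^± S + b_{m-1}^± outside. Let A = max of all |a| coefficients, B = max of all |b| coefficients, R = min{r_1,...,r_M, 0}, Q = min{q_1,...,q_M, 0}. Then for all 0 ≤ m ≤ M and all S > 0, |V_m(S)| ≤ e^{Q(t_m - t_M)} A S + e^{R(t_m - t_M)} B. -/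

import Mathlib

open MeasureTheory Real ProbabilityTheory NNReal

/-- `τ_m = σ_m² (t_m - t_{m-1}) / 2`. -/
noncomputable def tauBS (σ t : ℕ → ℝ) (m : ℕ) : ℝ := (σ m)^2 * (t m - t (m - 1)) / 2

/-- The lognormal transition density `ρ_m(y,S)` of the Black–Scholes model. -/
noncomputable def rhoBS (r q σ t : ℕ → ℝ) (m : ℕ) (y S : ℝ) : ℝ :=
  1 / (2 * Real.sqrt (Real.pi * tauBS σ t m) * y) *
    Real.exp (-(Real.log (y / S) -
      (2 / (σ m)^2) * (r m - q m - (σ m)^2 / 2) * tauBS σ t m)^2 / (4 * tauBS σ t m))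

lemma exp_mul_gpdf (μ : ℝ) (v : ℝ≥0) (x : ℝ) :
    Real.exp x * gaussianPDFReal μ v x
      = Real.exp (μ + v / 2) * gaussianPDFReal (μ + v) v x := by
  by_cases hv : v = 0
  · simp [hv]
  · have hv' : (v : ℝ) ≠ 0 := by exact_mod_cast hv
    simp only [gaussianPDFReal]
    rw [mul_left_comm, mul_left_comm (Real.exp (μ + v/2)), ← Real.exp_add, ← Real.exp_add]
    congr 2
    field_simp
    ring

lemma integrable_exp_mul_gpdf (μ : ℝ) (v : ℝ≥0) :
    Integrable (fun x => Real.exp x * gaussianPDFReal μ v x) := by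
  simp_rw [exp_mul_gpdf]
  exact (integrable_gaussianPDFReal _ _).const_mul _

lemma integral_exp_mul_gpdf (μ : ℝ) {v : ℝ≥0} (hv : v ≠ 0) :
    ∫ x, Real.exp x * gaussianPDFReal μ v x = Real.exp (μ + v / 2) := by
  simp_rw [exp_mul_gpdf]
  rw [MeasureTheory.integral_const_mul, integral_gaussianPDFReal_eq_one _ hv, mul_one]

lemma lognormal_subst (τ μ₀ S : ℝ) (hτ : 0 < τ) (hS : 0 < S) (v : ℝ≥0) (hv : (v:ℝ) = 2*τ)
    (F : ℝ → ℝ) :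
    (∫ y in Set.Ioi (0:ℝ), F y *
        (1 / (2 * Real.sqrt (Real.pi * τ) * y) *
          Real.exp (-(Real.log (y / S) - μ₀)^2 / (4 * τ)))
      = ∫ x, F (S * Real.exp x) * gaussianPDFReal μ₀ v x)
    ∧ (IntegrableOn (fun y => F y *
        (1 / (2 * Real.sqrt (Real.pi * τ) * y) *
          Real.exp (-(Real.log (y / S) - μ₀)^2 / (4 * τ)))) (Set.Ioi 0)
      ↔ Integrable (fun x => F (S * Real.exp x) * gaussianPDFReal μ₀ v x)) := by
  have himg : Set.Ioi (0:ℝ) = (fun x : ℝ => S * Real.exp x) '' Set.univ := by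
    ext y
    simp only [Set.mem_Ioi, Set.image_univ, Set.mem_range]
    constructor
    · intro hy
      exact ⟨Real.log (y / S), by rw [Real.exp_log (div_pos hy hS)]; field_simp⟩
    · rintro ⟨x, rfl⟩; positivity
  have hder : ∀ x ∈ (Set.univ : Set ℝ),
      HasDerivWithinAt (fun x : ℝ => S * Real.exp x) (S * Real.exp x) Set.univ x :=
    fun x _ => ((Real.hasDerivAt_exp x).const_mul S).hasDerivWithinAt
  have hinj : Set.InjOn (fun x : ℝ => S * Real.exp x) Set.univ := by
    intro a _ b _ h
    exact Real.exp_injective (mul_left_cancel₀ hS.ne' h)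
  have hpt : ∀ x : ℝ, |S * Real.exp x| • (F (S * Real.exp x) *
      (1 / (2 * Real.sqrt (Real.pi * τ) * (S * Real.exp x)) *
        Real.exp (-(Real.log (S * Real.exp x / S) - μ₀)^2 / (4 * τ))))
      = F (S * Real.exp x) * gaussianPDFReal μ₀ v x := by
    intro x
    have hy : (0:ℝ) < S * Real.exp x := by positivity
    have hlog : Real.log (S * Real.exp x / S) = x := by
      rw [mul_div_cancel_left₀ _ hS.ne', Real.log_exp]
    have hsqrt : Real.sqrt (2 * Real.pi * (v:ℝ)) = 2 * Real.sqrt (Real.pi * τ) := by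
      rw [hv, show (2:ℝ) * Real.pi * (2*τ) = 2^2 * (Real.pi * τ) by ring,
        Real.sqrt_mul (by positivity), Real.sqrt_sq (by norm_num)]
    have h2 : (2:ℝ) * ((v:ℝ)) = 4*τ - 2*τ + 2*τ := by rw [hv]; ring
    rw [smul_eq_mul, hlog, abs_of_pos hy, gaussianPDFReal, hsqrt, hv]
    have hs0 : (0:ℝ) < Real.sqrt (Real.pi * τ) :=
      Real.sqrt_pos.mpr (by positivity)
    rw [show (2:ℝ) * (2*τ) = 4*τ by ring]
    field_simp
  refine ⟨?_, ?_⟩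
  · rw [himg, integral_image_eq_integral_abs_deriv_smul MeasurableSet.univ hder hinj]
    simp only [hpt]
    exact setIntegral_univ
  · rw [himg, integrableOn_image_iff_integrableOn_abs_deriv_smul MeasurableSet.univ hder hinj]
    simp only [hpt]
    exact integrableOn_univ

set_option maxHeartbeats 1000000 in
lemma step_bound (t r q σ : ℕ → ℝ) (n : ℕ) (hσ : 0 < σ n) (htt : t (n-1) < t n)
    (A B R Q tM : ℝ) (hA : 0 ≤ A) (hB : 0 ≤ B)
    (hRr : R ≤ r n) (hQq : Q ≤ q n)
    (W : ℝ → ℝ)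
    (hW : ∀ y : ℝ, 0 < y →
      |W y| ≤ Real.exp (Q * (t n - tM)) * A * y + Real.exp (R * (t n - tM)) * B)
    (S : ℝ) (hS : 0 < S)
    (W'S : ℝ)
    (hrec : W'S = Real.exp (-2 * r n * tauBS σ t n / (σ n)^2) *
      ∫ y in Set.Ioi (0:ℝ), W y * rhoBS r q σ t n y S) :
    |W'S| ≤ Real.exp (Q * (t (n-1) - tM)) * A * S + Real.exp (R * (t (n-1) - tM)) * B := by
  set τ : ℝ := tauBS σ t n with hτdef
  have hτ : 0 < τ := by
    rw [hτdef, tauBS]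
    have := sub_pos.mpr htt
    positivity
  set μ₀ : ℝ := (2 / (σ n)^2) * (r n - q n - (σ n)^2 / 2) * τ with hμdef
  set v : ℝ≥0 := ⟨2*τ, by positivity⟩ with hvdef
  have hv : (v:ℝ) = 2*τ := rfl
  have hv0 : v ≠ 0 := by
    intro h
    have : (v:ℝ) = 0 := by rw [h]; simp
    rw [hv] at this; linarith
  set A' : ℝ := Real.exp (Q * (t n - tM)) * A with hA'def
  set B' : ℝ := Real.exp (R * (t n - tM)) * B with hB'def
  have hA' : 0 ≤ A' := by positivity
  have hB' : 0 ≤ B' := by positivity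
  -- the linear majorant
  have hrho : ∀ y : ℝ, rhoBS r q σ t n y S
      = 1 / (2 * Real.sqrt (Real.pi * τ) * y) *
          Real.exp (-(Real.log (y / S) - μ₀)^2 / (4 * τ)) := fun y => rfl
  obtain ⟨heq, hiff⟩ := lognormal_subst τ μ₀ S hτ hS v hv (fun y => A' * y + B')
  have hsplit : (fun x => (A' * (S * Real.exp x) + B') * gaussianPDFReal μ₀ v x)
      = fun x => (A' * S) * (Real.exp x * gaussianPDFReal μ₀ v x)
        + B' * gaussianPDFReal μ₀ v x := by
    funext x; ring
  have hgX : Integrable (fun x => (A' * (S * Real.exp x) + B') * gaussianPDFReal μ₀ v x) := by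
    rw [hsplit]
    exact ((integrable_exp_mul_gpdf μ₀ v).const_mul _).add
      ((integrable_gaussianPDFReal μ₀ v).const_mul _)
  have hgXval : (∫ x, (A' * (S * Real.exp x) + B') * gaussianPDFReal μ₀ v x)
      = A' * S * Real.exp (μ₀ + τ) + B' := by
    rw [hsplit, integral_add ((integrable_exp_mul_gpdf μ₀ v).const_mul _)
        ((integrable_gaussianPDFReal μ₀ v).const_mul _),
      integral_const_mul, integral_const_mul, integral_exp_mul_gpdf μ₀ hv0,
      integral_gaussianPDFReal_eq_one μ₀ hv0, mul_one]
    congr 2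
    rw [hv]; ring
  have hmajor : IntegrableOn (fun y => (A' * y + B') * rhoBS r q σ t n y S) (Set.Ioi 0) := by
    simp only [hrho]
    exact hiff.mpr hgX
  have hρnn : ∀ y : ℝ, 0 < y → 0 ≤ rhoBS r q σ t n y S := by
    intro y hy
    rw [hrho]
    have h1 : (0:ℝ) ≤ 1 / (2 * Real.sqrt (Real.pi * τ) * y) := by positivity
    positivity
  have hIval : (∫ y in Set.Ioi (0:ℝ), (A' * y + B') * rhoBS r q σ t n y S)
      = A' * S * Real.exp (μ₀ + τ) + B' := by
    simp only [hrho]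
    rw [heq, hgXval]
  -- bound on the integral
  have hI : |∫ y in Set.Ioi (0:ℝ), W y * rhoBS r q σ t n y S|
      ≤ A' * S * Real.exp (μ₀ + τ) + B' := by
    by_cases hint : IntegrableOn (fun y => W y * rhoBS r q σ t n y S) (Set.Ioi 0)
    · calc |∫ y in Set.Ioi (0:ℝ), W y * rhoBS r q σ t n y S|
          ≤ ∫ y in Set.Ioi (0:ℝ), |W y| * |rhoBS r q σ t n y S| := by
            simpa [Real.norm_eq_abs, abs_mul] using
              norm_integral_le_integral_norm (μ := volume.restrict (Set.Ioi 0))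
                (fun y => W y * rhoBS r q σ t n y S)
        _ ≤ ∫ y in Set.Ioi (0:ℝ), (A' * y + B') * rhoBS r q σ t n y S := by
            have habs : IntegrableOn (fun y => |W y| * |rhoBS r q σ t n y S|) (Set.Ioi 0) := by
              have := hint.abs
              simpa [abs_mul, IntegrableOn] using this
            apply setIntegral_mono_on habs hmajor measurableSet_Ioi
            intro y hy
            rw [Set.mem_Ioi] at hy
            rw [abs_of_nonneg (hρnn y hy)]
            exact mul_le_mul_of_nonneg_right (hW y hy) (hρnn y hy)
        _ = A' * S * Real.exp (μ₀ + τ) + B' := hIval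
    · rw [integral_undef hint]
      simp only [abs_zero]
      positivity
  -- put it together
  rw [hrec, abs_mul, abs_of_pos (Real.exp_pos _)]
  have hc : Real.exp (-2 * r n * τ / (σ n)^2) * (A' * S * Real.exp (μ₀ + τ) + B')
      ≤ Real.exp (Q * (t (n-1) - tM)) * A * S + Real.exp (R * (t (n-1) - tM)) * B := by
    have hσ2 : (σ n)^2 ≠ 0 := by positivity
    have hΔ : 2 * τ / (σ n)^2 = t n - t (n-1) := by
      rw [hτdef, tauBS]; field_simp
    have e1 : Real.exp (-2 * r n * τ / (σ n)^2) * Real.exp (μ₀ + τ)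
        = Real.exp (-(q n) * (t n - t (n-1))) := by
      rw [← Real.exp_add]
      congr 1
      rw [hμdef, ← hΔ]
      field_simp
      ring
    have e2 : Real.exp (-2 * r n * τ / (σ n)^2) = Real.exp (-(r n) * (t n - t (n-1))) := by
      congr 1
      rw [← hΔ]; field_simp
    have hd : (0:ℝ) ≤ t n - t (n-1) := by linarith
    have k1 : Real.exp (Q * (t n - tM)) * Real.exp (-(q n) * (t n - t (n-1)))
        ≤ Real.exp (Q * (t (n-1) - tM)) := by
      rw [← Real.exp_add]
      apply Real.exp_le_exp.mpr
      have h := mul_le_mul_of_nonneg_right hQq hd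
      nlinarith [h]
    have k2 : Real.exp (R * (t n - tM)) * Real.exp (-(r n) * (t n - t (n-1)))
        ≤ Real.exp (R * (t (n-1) - tM)) := by
      rw [← Real.exp_add]
      apply Real.exp_le_exp.mpr
      have h := mul_le_mul_of_nonneg_right hRr hd
      nlinarith [h]
    calc Real.exp (-2 * r n * τ / (σ n)^2) * (A' * S * Real.exp (μ₀ + τ) + B')
        = (Real.exp (Q * (t n - tM)) * Real.exp (-(q n) * (t n - t (n-1)))) * A * S
          + (Real.exp (R * (t n - tM)) * Real.exp (-(r n) * (t n - t (n-1)))) * B := by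
          rw [hA'def, hB'def, ← e1, ← e2]; ring
      _ ≤ Real.exp (Q * (t (n-1) - tM)) * A * S + Real.exp (R * (t (n-1) - tM)) * B :=
          add_le_add (mul_le_mul_of_nonneg_right
            (mul_le_mul_of_nonneg_right k1 hA) hS.le)
            (mul_le_mul_of_nonneg_right k2 hB)
  calc Real.exp (-2 * r n * τ / (σ n)^2) * |∫ y in Set.Ioi (0:ℝ), W y * rhoBS r q σ t n y S|
      ≤ Real.exp (-2 * r n * τ / (σ n)^2) * (A' * S * Real.exp (μ₀ + τ) + B') :=
        mul_le_mul_of_nonneg_left hI (Real.exp_pos _).le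
    _ ≤ _ := hc

/-- A priori bound on the recursively defined option values:
`|V_m(S)| ≤ e^{Q(t_m - t_M)} A S + e^{R(t_m - t_M)} B` for all `0 ≤ m ≤ M`, `S > 0`. -/
theorem stmt5 (M : ℕ) (hM : 1 ≤ M) (t r q σ : ℕ → ℝ)
    (hσ : ∀ m, 0 < σ m) (ht : ∀ m, 1 ≤ m → m ≤ M → t (m - 1) < t m)
    (Km Kp : ℕ → EReal) (hKm0 : Km 0 = 0) (hKp0 : Kp 0 = ⊤)
    (hKmnn : ∀ m, (0 : EReal) ≤ Km m) (hKK : ∀ m, Km m ≤ Kp m)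
    (aP aN bP bN : ℕ → ℝ) (aM bM A B R Q : ℝ)
    (haP : ∀ m, m ≤ M → |aP m| ≤ A) (haN : ∀ m, m ≤ M → |aN m| ≤ A) (haM : |aM| ≤ A)
    (hbP : ∀ m, m ≤ M → |bP m| ≤ B) (hbN : ∀ m, m ≤ M → |bN m| ≤ B) (hbM : |bM| ≤ B)
    (hR : ∀ m, 1 ≤ m → m ≤ M → R ≤ r m) (hR0 : R ≤ 0)
    (hQ : ∀ m, 1 ≤ m → m ≤ M → Q ≤ q m) (hQ0 : Q ≤ 0)
    (V : ℕ → ℝ → ℝ)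
    (hVM : ∀ S : ℝ, 0 < S → |V M S| ≤ A * S + B)
    (hrec : ∀ m, 1 ≤ m → m ≤ M → ∀ S : ℝ, 0 < S →
      Km (m - 1) < (S : EReal) → (S : EReal) < Kp (m - 1) →
      V (m - 1) S = Real.exp (-2 * r m * tauBS σ t m / (σ m)^2) *
        ∫ y in Set.Ioi (0:ℝ), V m y * rhoBS r q σ t m y S)
    (hlo : ∀ m, 1 ≤ m → m ≤ M → ∀ S : ℝ, 0 < S → (S : EReal) ≤ Km (m - 1) →
      V (m - 1) S = aN (m - 1) * S + bN (m - 1))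
    (hhi : ∀ m, 1 ≤ m → m ≤ M → ∀ S : ℝ, 0 < S → Kp (m - 1) ≤ (S : EReal) →
      V (m - 1) S = aP (m - 1) * S + bP (m - 1)) :
    ∀ m, m ≤ M → ∀ S : ℝ, 0 < S →
      |V m S| ≤ Real.exp (Q * (t m - t M)) * A * S + Real.exp (R * (t m - t M)) * B := by
  have hA : 0 ≤ A := le_trans (abs_nonneg _) haM
  have hB : 0 ≤ B := le_trans (abs_nonneg _) hbM
  -- monotonicity of t up to M
  have tmono : ∀ j, j ≤ M → t (M - j) ≤ t M := by
    intro j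
    induction j with
    | zero => simp
    | succ j ih =>
      intro hj
      have hj' : j ≤ M := le_of_lt (Nat.lt_of_succ_le hj)
      have h1 : 1 ≤ M - j := Nat.le_sub_of_add_le (by omega)
      have h2 : M - j ≤ M := Nat.sub_le _ _
      have := ht (M - j) h1 h2
      have he : M - j - 1 = M - (j+1) := by omega
      rw [he] at this
      exact le_trans this.le (ih hj')
  -- bound for linear payoffs at level m ≤ M
  have lin_bound : ∀ m, m ≤ M → ∀ (a b : ℝ), |a| ≤ A → |b| ≤ B → ∀ S : ℝ, 0 < S →
      |a * S + b| ≤ Real.exp (Q * (t m - t M)) * A * S + Real.exp (R * (t m - t M)) * B := by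
    intro m hm a b ha hb S hS
    have htm : t m ≤ t M := by
      have := tmono (M - m) (Nat.sub_le _ _)
      rwa [Nat.sub_sub_self hm] at this
    have h1 : (1:ℝ) ≤ Real.exp (Q * (t m - t M)) := by
      rw [Real.one_le_exp_iff]
      nlinarith [hQ0]
    have h2 : (1:ℝ) ≤ Real.exp (R * (t m - t M)) := by
      rw [Real.one_le_exp_iff]
      nlinarith [hR0]
    calc |a * S + b| ≤ |a| * S + |b| := by
          refine le_trans (abs_add_le _ _) ?_
          rw [abs_mul, abs_of_pos hS]
      _ ≤ A * S + B :=
          add_le_add (mul_le_mul_of_nonneg_right ha hS.le) hb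
      _ ≤ Real.exp (Q * (t m - t M)) * A * S + Real.exp (R * (t m - t M)) * B := by
          nlinarith [mul_nonneg hA hS.le]
  suffices key : ∀ j, j ≤ M → ∀ S : ℝ, 0 < S →
      |V (M - j) S| ≤ Real.exp (Q * (t (M - j) - t M)) * A * S
        + Real.exp (R * (t (M - j) - t M)) * B by
    intro m hm S hS
    have := key (M - m) (Nat.sub_le _ _) S hS
    rwa [Nat.sub_sub_self hm] at this
  intro j
  induction j with
  | zero =>
    intro _ S hS
    simpa using hVM S hS
  | succ j ih =>
    intro hj S hS
    have hj' : j ≤ M := le_of_lt (Nat.lt_of_succ_le hj)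
    set n := M - j with hndef
    have h1n : 1 ≤ n := Nat.le_sub_of_add_le (by omega)
    have hnM : n ≤ M := Nat.sub_le _ _
    have hm1 : M - (j+1) = n - 1 := by omega
    rw [hm1]
    rcases le_or_gt (S : EReal) (Km (n-1)) with hcase | hcase
    · rw [hlo n h1n hnM S hS hcase]
      exact lin_bound (n-1) (le_trans (Nat.sub_le _ _) hnM)
        (aN (n-1)) (bN (n-1)) (haN _ (le_trans (Nat.sub_le _ _) hnM))
        (hbN _ (le_trans (Nat.sub_le _ _) hnM)) S hS
    · rcases le_or_gt (Kp (n-1)) (S : EReal) with hcase2 | hcase2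
      · rw [hhi n h1n hnM S hS hcase2]
        exact lin_bound (n-1) (le_trans (Nat.sub_le _ _) hnM)
          (aP (n-1)) (bP (n-1)) (haP _ (le_trans (Nat.sub_le _ _) hnM))
          (hbP _ (le_trans (Nat.sub_le _ _) hnM)) S hS
      · exact step_bound t r q σ n (hσ n) (ht n h1n hnM) A B R Q (t M) hA hB
          (hR n h1n hnM) (hQ n h1n hnM) (V n) (ih hj') S hS (V (n-1) S)
          (hrec n h1n hnM S hS hcase hcase2)
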